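/- For square matrices A and B and real h, the Strang splitting S(h) = e^{(h/2)A}·e^{hB}·e^{(h/2)A} satisfies S(h) = e^{h(A+B)} + O(h³), i.e., there exist C > 0 and δ > 0 such that for all |h| < δ, ‖S(h) - e^{h(A+B)}‖ ≤ C·|h|³. -/

import Mathlib

set_option maxHeartbeats 4000000

open NormedSpace

section Aux

variable {𝔸 : Type*} [NormedRing 𝔸] [NormedAlgebra ℂ 𝔸] [CompleteSpace 𝔸]

lemma strang_exp_taylor2 (M : 𝔸) (z : ℂ) :
    NormedSpace.exp (z • M) - (1 + z • M + (z ^ 2 / 2) • (M * M)) =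
      ∑' k : ℕ, ((((k + 3).factorial : ℂ))⁻¹) • (z • M) ^ (k + 3) := by
  have hsum : Summable fun k : ℕ => (((k.factorial : ℂ))⁻¹) • (z • M) ^ k :=
    NormedSpace.expSeries_summable' (𝕂 := ℂ) (z • M)
  have h0 := (Summable.sum_add_tsum_nat_add 3 hsum).symm
  rw [NormedSpace.exp_eq_tsum ℂ]
  simp only []
  rw [h0]
  have : ∑ i ∈ Finset.range 3, (((i.factorial : ℂ))⁻¹) • (z • M) ^ i
      = 1 + z • M + (z ^ 2 / 2) • (M * M) := by
    simp [Finset.sum_range_succ, pow_succ, smul_smul, smul_mul_assoc, mul_smul_comm]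
    match_scalars <;> ring
  rw [this]
  abel

lemma strang_exp_taylor2_bound (M : 𝔸) (z : ℂ) (hz : ‖z‖ ≤ 1) :
    ‖NormedSpace.exp (z • M) - (1 + z • M + (z ^ 2 / 2) • (M * M))‖ ≤
      ‖z‖ ^ 3 * Real.exp ‖M‖ := by
  rw [strang_exp_taylor2]
  have hmaj : Summable fun k : ℕ => ‖z‖ ^ 3 * (‖M‖ ^ (k + 3) / (k + 3).factorial) := by
    apply Summable.mul_left
    exact ((summable_nat_add_iff 3).2 (Real.summable_pow_div_factorial ‖M‖))
  have hterm : ∀ k : ℕ, ‖((((k + 3).factorial : ℂ))⁻¹) • (z • M) ^ (k + 3)‖ ≤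
      ‖z‖ ^ 3 * (‖M‖ ^ (k + 3) / (k + 3).factorial) := by
    intro k
    rw [norm_smul]
    have h1 : ‖(z • M) ^ (k + 3)‖ ≤ (‖z‖ * ‖M‖) ^ (k + 3) := by
      calc ‖(z • M) ^ (k + 3)‖ ≤ ‖z • M‖ ^ (k + 3) := norm_pow_le' _ (by omega)
        _ ≤ (‖z‖ * ‖M‖) ^ (k + 3) := by rw [norm_smul]
    have h2 : ‖((((k + 3).factorial : ℂ)))⁻¹‖ = ((k + 3).factorial : ℝ)⁻¹ := by
      rw [norm_inv]; norm_num
    rw [h2]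
    have h3 : ‖z‖ ^ (k + 3) ≤ ‖z‖ ^ 3 :=
      pow_le_pow_of_le_one (norm_nonneg z) hz (by omega)
    calc ((k + 3).factorial : ℝ)⁻¹ * ‖(z • M) ^ (k + 3)‖
        ≤ ((k + 3).factorial : ℝ)⁻¹ * ((‖z‖ * ‖M‖) ^ (k + 3)) := by
          apply mul_le_mul_of_nonneg_left h1 (by positivity)
      _ = ‖z‖ ^ (k + 3) * (‖M‖ ^ (k + 3) / (k + 3).factorial) := by
          rw [mul_pow]; ring
      _ ≤ ‖z‖ ^ 3 * (‖M‖ ^ (k + 3) / (k + 3).factorial) := by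
          apply mul_le_mul_of_nonneg_right h3 (by positivity)
  calc ‖∑' k : ℕ, ((((k + 3).factorial : ℂ))⁻¹) • (z • M) ^ (k + 3)‖
      ≤ ∑' k : ℕ, ‖z‖ ^ 3 * (‖M‖ ^ (k + 3) / (k + 3).factorial) :=
        tsum_of_norm_bounded hmaj.hasSum hterm
    _ = ‖z‖ ^ 3 * ∑' k : ℕ, ‖M‖ ^ (k + 3) / (k + 3).factorial := tsum_mul_left
    _ ≤ ‖z‖ ^ 3 * Real.exp ‖M‖ := by
        apply mul_le_mul_of_nonneg_left _ (by positivity)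
        have hs := Real.summable_pow_div_factorial ‖M‖
        have hsplit := (Summable.sum_add_tsum_nat_add 3 hs).symm
        have hexp : Real.exp ‖M‖ = ∑' k : ℕ, ‖M‖ ^ k / k.factorial := by
          rw [Real.exp_eq_exp_ℝ, NormedSpace.exp_eq_tsum_div]
        rw [hexp, hsplit]
        have hhead : (0:ℝ) ≤ ∑ i ∈ Finset.range 3, ‖M‖ ^ i / i.factorial := by positivity
        linarith

omit [CompleteSpace 𝔸] in
lemma strang_P_norm_le (h1 : ‖(1:𝔸)‖ ≤ 1) (M : 𝔸) (z : ℂ) (hz : ‖z‖ ≤ 1) :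
    ‖(1:𝔸) + z • M + (z ^ 2 / 2) • (M * M)‖ ≤ 1 + ‖M‖ + ‖M‖ ^ 2 := by
  have l1 : ‖z • M‖ ≤ ‖M‖ := by
    rw [norm_smul]
    nlinarith [norm_nonneg M, norm_nonneg z]
  have l2 : ‖(z ^ 2 / 2) • (M * M)‖ ≤ ‖M‖ ^ 2 := by
    rw [norm_smul]
    have h0 : ‖z ^ 2 / 2‖ ≤ 1 := by
      rw [norm_div, norm_pow]
      simp only [Complex.norm_ofNat]
      nlinarith [norm_nonneg z]
    have h2 : ‖M * M‖ ≤ ‖M‖ ^ 2 := by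
      rw [sq]; exact norm_mul_le _ _
    nlinarith [norm_nonneg (M * M), norm_nonneg z, norm_nonneg M]
  calc ‖(1:𝔸) + z • M + (z ^ 2 / 2) • (M * M)‖
      ≤ ‖(1:𝔸)‖ + ‖z • M‖ + ‖(z ^ 2 / 2) • (M * M)‖ := norm_add₃_le
    _ ≤ 1 + ‖M‖ + ‖M‖ ^ 2 := by gcongr

lemma strang_exp_norm_le (h1 : ‖(1:𝔸)‖ ≤ 1) (M : 𝔸) (z : ℂ) (hz : ‖z‖ ≤ 1) :
    ‖NormedSpace.exp (z • M)‖ ≤ Real.exp ‖M‖ + (1 + ‖M‖ + ‖M‖ ^ 2) := by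
  have e1 := strang_exp_taylor2_bound M z hz
  have e2 := strang_P_norm_le h1 M z hz
  have e3 : ‖z‖ ^ 3 ≤ 1 := pow_le_one₀ (norm_nonneg z) hz
  have e4 : (0:ℝ) < Real.exp ‖M‖ := Real.exp_pos _
  calc ‖NormedSpace.exp (z • M)‖
      = ‖(NormedSpace.exp (z • M) - ((1:𝔸) + z • M + (z ^ 2 / 2) • (M * M)))
        + ((1:𝔸) + z • M + (z ^ 2 / 2) • (M * M))‖ := by rw [sub_add_cancel]
    _ ≤ ‖NormedSpace.exp (z • M) - ((1:𝔸) + z • M + (z ^ 2 / 2) • (M * M))‖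
        + ‖(1:𝔸) + z • M + (z ^ 2 / 2) • (M * M)‖ := norm_add_le _ _
    _ ≤ Real.exp ‖M‖ + (1 + ‖M‖ + ‖M‖ ^ 2) := by nlinarith

omit [CompleteSpace 𝔸] in
lemma strang_poly_identity (A B : 𝔸) (a : ℂ) :
    (1 + a • A + (a ^ 2 / 2) • (A * A)) * (1 + (2 * a) • B + ((2 * a) ^ 2 / 2) • (B * B))
        * (1 + a • A + (a ^ 2 / 2) • (A * A))
      - (1 + (2 * a) • (A + B) + ((2 * a) ^ 2 / 2) • ((A + B) * (A + B)))
    = a ^ 3 • (B * A * A + (2:ℂ) • (B * B * A) + A * A * A + (2:ℂ) • (A * B * A)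
          + (2:ℂ) • (A * B * B) + A * A * B)
      + a ^ 4 • (B * B * A * A + A * B * A * A + (2:ℂ) • (A * B * B * A)
          + ((1:ℂ)/4) • (A * A * A * A) + A * A * B * A + A * A * B * B)
      + a ^ 5 • (A * B * B * A * A + ((1:ℂ)/2) • (A * A * B * A * A) + A * A * B * B * A)
      + a ^ 6 • (((1:ℂ)/2) • (A * A * B * B * A * A)) := by
  simp only [mul_add, add_mul, smul_mul_assoc, mul_smul_comm, smul_smul, mul_one, one_mul,
    smul_add, mul_assoc]
  match_scalars <;> ring

omit [CompleteSpace 𝔸] in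
lemma strang_decomp (e1 e2 e4 p1 p2 p4 : 𝔸) :
    e1 * e2 * e1 - e4 =
      (e1 - p1) * e2 * e1 + p1 * (e2 - p2) * e1 + p1 * p2 * (e1 - p1)
        + (p1 * p2 * p1 - p4) - (e4 - p4) := by
  noncomm_ring

end Aux

theorem stmt_3 (n : ℕ)
    (A B : EuclideanSpace ℂ (Fin n) →L[ℂ] EuclideanSpace ℂ (Fin n)) :
    ∃ C > 0, ∃ δ > 0, ∀ h : ℝ, |h| < δ →
      ‖NormedSpace.exp (((h : ℂ) / 2) • A) * NormedSpace.exp ((h : ℂ) • B)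
          * NormedSpace.exp (((h : ℂ) / 2) • A)
        - NormedSpace.exp ((h : ℂ) • (A + B))‖ ≤ C * |h| ^ 3 := by
  have h1 : ‖(1 : EuclideanSpace ℂ (Fin n) →L[ℂ] EuclideanSpace ℂ (Fin n))‖ ≤ 1 := ContinuousLinearMap.norm_id_le
  set KA : ℝ := Real.exp ‖A‖ + (1 + ‖A‖ + ‖A‖ ^ 2) with hKA
  set KB : ℝ := Real.exp ‖B‖ + (1 + ‖B‖ + ‖B‖ ^ 2) with hKB
  have hKApos : 0 < KA := by positivity
  have hKBpos : 0 < KB := by positivity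
  set Q3 := B * A * A + (2:ℂ) • (B * B * A) + A * A * A + (2:ℂ) • (A * B * A)
          + (2:ℂ) • (A * B * B) + A * A * B with hQ3
  set Q4 := B * B * A * A + A * B * A * A + (2:ℂ) • (A * B * B * A)
          + ((1:ℂ)/4) • (A * A * A * A) + A * A * B * A + A * A * B * B with hQ4
  set Q5 := A * B * B * A * A + ((1:ℂ)/2) • (A * A * B * A * A) + A * A * B * B * A with hQ5
  set Q6 := ((1:ℂ)/2) • (A * A * B * B * A * A) with hQ6
  refine ⟨Real.exp ‖A‖ * KB * KA + KA * Real.exp ‖B‖ * KA + KA * KB * Real.exp ‖A‖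
      + (‖Q3‖ + ‖Q4‖ + ‖Q5‖ + ‖Q6‖) + Real.exp ‖A + B‖ + 1, by positivity, 1, one_pos, ?_⟩
  intro h hh
  have hh1 : |h| ≤ 1 := le_of_lt hh
  set a : ℂ := (h : ℂ) / 2 with ha
  have hna : ‖a‖ = |h| / 2 := by
    rw [ha, norm_div, Complex.norm_real, Complex.norm_ofNat, Real.norm_eq_abs]
  have hn2a : ‖2 * a‖ = |h| := by
    rw [norm_mul, hna, Complex.norm_ofNat]; ring
  have hza : ‖a‖ ≤ 1 := by rw [hna]; linarith
  have hz2a : ‖2 * a‖ ≤ 1 := by rw [hn2a]; exact hh1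
  have hcast : (h : ℂ) = 2 * a := by rw [ha]; ring
  rw [hcast]
  set E1 := NormedSpace.exp (a • A) with hE1
  set E2 := NormedSpace.exp ((2 * a) • B) with hE2
  set E4 := NormedSpace.exp ((2 * a) • (A + B)) with hE4
  set P1 := 1 + a • A + (a ^ 2 / 2) • (A * A) with hP1
  set P2 := 1 + (2 * a) • B + ((2 * a) ^ 2 / 2) • (B * B) with hP2
  set P4 := 1 + (2 * a) • (A + B) + ((2 * a) ^ 2 / 2) • ((A + B) * (A + B)) with hP4
  -- individual remainder bounds
  have hah : ‖a‖ ≤ |h| := by rw [hna]; linarith [abs_nonneg h]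
  have ha3 : ‖a‖ ^ 3 ≤ |h| ^ 3 := pow_le_pow_left₀ (norm_nonneg a) hah 3
  have hR1 : ‖E1 - P1‖ ≤ |h| ^ 3 * Real.exp ‖A‖ :=
    le_trans (strang_exp_taylor2_bound A a hza)
      (mul_le_mul_of_nonneg_right ha3 (Real.exp_pos _).le)
  have hR2 : ‖E2 - P2‖ ≤ |h| ^ 3 * Real.exp ‖B‖ := by
    refine le_trans (strang_exp_taylor2_bound B (2 * a) hz2a) ?_
    rw [hn2a]
  have hR4 : ‖E4 - P4‖ ≤ |h| ^ 3 * Real.exp ‖A + B‖ := by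
    refine le_trans (strang_exp_taylor2_bound (A + B) (2 * a) hz2a) ?_
    rw [hn2a]
  -- size bounds
  have hE1n : ‖E1‖ ≤ KA := strang_exp_norm_le h1 A a hza
  have hE2n : ‖E2‖ ≤ KB := strang_exp_norm_le h1 B (2 * a) hz2a
  have hP1n : ‖P1‖ ≤ KA := by
    refine le_trans (strang_P_norm_le h1 A a hza) ?_
    rw [hKA]; linarith [Real.exp_pos ‖A‖]
  have hP2n : ‖P2‖ ≤ KB := by
    refine le_trans (strang_P_norm_le h1 B (2 * a) hz2a) ?_
    rw [hKB]; linarith [Real.exp_pos ‖B‖]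
  -- polynomial part
  have hpoly : ‖P1 * P2 * P1 - P4‖ ≤ |h| ^ 3 * (‖Q3‖ + ‖Q4‖ + ‖Q5‖ + ‖Q6‖) := by
    rw [hP1, hP2, hP4, strang_poly_identity A B a, ← hQ3, ← hQ4, ← hQ5, ← hQ6]
    have key : ∀ k : ℕ, 3 ≤ k → ‖a‖ ^ k ≤ |h| ^ 3 := by
      intro k hk
      calc ‖a‖ ^ k ≤ ‖a‖ ^ 3 := pow_le_pow_of_le_one (norm_nonneg a) hza hk
        _ ≤ |h| ^ 3 := ha3
    calc ‖a ^ 3 • Q3 + a ^ 4 • Q4 + a ^ 5 • Q5 + a ^ 6 • Q6‖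
        ≤ ‖a ^ 3 • Q3‖ + ‖a ^ 4 • Q4‖ + ‖a ^ 5 • Q5‖ + ‖a ^ 6 • Q6‖ := by
          exact le_trans (norm_add_le _ _) (by
            have := le_trans (norm_add_le (a ^ 3 • Q3 + a ^ 4 • Q4) (a ^ 5 • Q5))
              (add_le_add_left (norm_add_le _ _) _)
            linarith [norm_add_le (a ^ 3 • Q3 + a ^ 4 • Q4 + a ^ 5 • Q5) (a ^ 6 • Q6),
              norm_add_le (a ^ 3 • Q3 + a ^ 4 • Q4) (a ^ 5 • Q5),
              norm_add_le (a ^ 3 • Q3) (a ^ 4 • Q4)])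
      _ ≤ |h| ^ 3 * ‖Q3‖ + |h| ^ 3 * ‖Q4‖ + |h| ^ 3 * ‖Q5‖ + |h| ^ 3 * ‖Q6‖ := by
          have t3 : ‖a ^ 3 • Q3‖ ≤ |h| ^ 3 * ‖Q3‖ := by
            refine le_trans (_root_.norm_smul_le (a ^ 3) Q3) ?_
            rw [norm_pow]
            exact mul_le_mul_of_nonneg_right (key 3 le_rfl) (norm_nonneg _)
          have t4 : ‖a ^ 4 • Q4‖ ≤ |h| ^ 3 * ‖Q4‖ := by
            refine le_trans (_root_.norm_smul_le (a ^ 4) Q4) ?_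
            rw [norm_pow]
            exact mul_le_mul_of_nonneg_right (key 4 (by omega)) (norm_nonneg _)
          have t5 : ‖a ^ 5 • Q5‖ ≤ |h| ^ 3 * ‖Q5‖ := by
            refine le_trans (_root_.norm_smul_le (a ^ 5) Q5) ?_
            rw [norm_pow]
            exact mul_le_mul_of_nonneg_right (key 5 (by omega)) (norm_nonneg _)
          have t6 : ‖a ^ 6 • Q6‖ ≤ |h| ^ 3 * ‖Q6‖ := by
            refine le_trans (_root_.norm_smul_le (a ^ 6) Q6) ?_
            rw [norm_pow]
            exact mul_le_mul_of_nonneg_right (key 6 (by omega)) (norm_nonneg _)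
          linarith
      _ = |h| ^ 3 * (‖Q3‖ + ‖Q4‖ + ‖Q5‖ + ‖Q6‖) := by ring
  -- decomposition
  rw [strang_decomp E1 E2 E4 P1 P2 P4]
  have hKA0 : (0:ℝ) ≤ KA := hKApos.le
  have hKB0 : (0:ℝ) ≤ KB := hKBpos.le
  have hxA : (0:ℝ) ≤ |h| ^ 3 * Real.exp ‖A‖ := by positivity
  have hxB : (0:ℝ) ≤ |h| ^ 3 * Real.exp ‖B‖ := by positivity
  have n3 : ∀ x y z : EuclideanSpace ℂ (Fin n) →L[ℂ] EuclideanSpace ℂ (Fin n), ‖x * y * z‖ ≤ ‖x‖ * ‖y‖ * ‖z‖ := fun x y z =>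
    le_trans (norm_mul_le _ _) (mul_le_mul_of_nonneg_right (norm_mul_le _ _) (norm_nonneg _))
  have b1 : ‖(E1 - P1) * E2 * E1‖ ≤ |h| ^ 3 * Real.exp ‖A‖ * KB * KA :=
    le_trans (n3 _ _ _)
      (mul_le_mul (mul_le_mul hR1 hE2n (norm_nonneg E2) hxA) hE1n (norm_nonneg E1)
        (mul_nonneg hxA hKB0))
  have b2 : ‖P1 * (E2 - P2) * E1‖ ≤ KA * (|h| ^ 3 * Real.exp ‖B‖) * KA :=
    le_trans (n3 _ _ _)
      (mul_le_mul (mul_le_mul hP1n hR2 (norm_nonneg _) hKA0) hE1n (norm_nonneg E1)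
        (mul_nonneg hKA0 hxB))
  have b3 : ‖P1 * P2 * (E1 - P1)‖ ≤ KA * KB * (|h| ^ 3 * Real.exp ‖A‖) :=
    le_trans (n3 _ _ _)
      (mul_le_mul (mul_le_mul hP1n hP2n (norm_nonneg _) hKA0) hR1 (norm_nonneg _)
        (mul_nonneg hKA0 hKB0))
  calc ‖(E1 - P1) * E2 * E1 + P1 * (E2 - P2) * E1 + P1 * P2 * (E1 - P1)
        + (P1 * P2 * P1 - P4) - (E4 - P4)‖
      ≤ ‖(E1 - P1) * E2 * E1 + P1 * (E2 - P2) * E1 + P1 * P2 * (E1 - P1)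
        + (P1 * P2 * P1 - P4)‖ + ‖E4 - P4‖ := norm_sub_le _ _
    _ ≤ ‖(E1 - P1) * E2 * E1 + P1 * (E2 - P2) * E1 + P1 * P2 * (E1 - P1)‖
        + ‖P1 * P2 * P1 - P4‖ + ‖E4 - P4‖ := by
          exact add_le_add_left (norm_add_le _ _) _
    _ ≤ (‖(E1 - P1) * E2 * E1‖ + ‖P1 * (E2 - P2) * E1‖ + ‖P1 * P2 * (E1 - P1)‖)
        + ‖P1 * P2 * P1 - P4‖ + ‖E4 - P4‖ := by
          exact add_le_add_left (add_le_add_left norm_add₃_le _) _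
    _ ≤ (|h| ^ 3 * Real.exp ‖A‖ * KB * KA + KA * (|h| ^ 3 * Real.exp ‖B‖) * KA
          + KA * KB * (|h| ^ 3 * Real.exp ‖A‖))
        + |h| ^ 3 * (‖Q3‖ + ‖Q4‖ + ‖Q5‖ + ‖Q6‖) + |h| ^ 3 * Real.exp ‖A + B‖ :=
          add_le_add (add_le_add (add_le_add (add_le_add b1 b2) b3) hpoly) hR4
    _ ≤ (Real.exp ‖A‖ * KB * KA + KA * Real.exp ‖B‖ * KA + KA * KB * Real.exp ‖A‖
          + (‖Q3‖ + ‖Q4‖ + ‖Q5‖ + ‖Q6‖) + Real.exp ‖A + B‖ + 1) * |h| ^ 3 := by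
          nlinarith [abs_nonneg h, pow_nonneg (abs_nonneg h) 3]
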